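/- Let A be an ℕ-graded ring and P a finitely generated ℤ-graded projective right A-module with filtration F^λP (the submodule generated by homogeneous elements of degree ≤ λ). Then for each k, the quotient F^{k+1}P/F^kP is isomorphic as a graded A-module to T(P)_{k+1} ⊗_{A₀} A(−(k+1)), and this isomorphism is natural in P (independent of the choice of A₀-linear section of P → T(P)). -/

import Mathlib

universe u

/-- The submodule `P·A₊` (for left modules: `A₊·P`), `A₊ = ⊕_{n>0} A_n`. -/
def posSMulSubmodule {A : Type u} [Ring A] (𝒜 : ℤ → AddSubgroup A)
    (P : Type u) [AddCommGroup P] [Module A P] : Submodule A P :=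
  Submodule.span A {x : P | ∃ n : ℤ, 0 < n ∧ ∃ a ∈ 𝒜 n, ∃ p : P, x = a • p}

/-- The degree-`κ` component of `T(P) = P/P·A₊` as an `A₀`-module (the image of `P_κ`). -/
def TSub {A : Type u} [Ring A] (𝒜 : ℤ → AddSubgroup A) (A₀ : Subring A)
    (P : Type u) [AddCommGroup P] [Module A P] (ℳ : ℤ → AddSubgroup P) (κ : ℤ) :
    Submodule A₀ (P ⧸ posSMulSubmodule 𝒜 P) :=
  Submodule.span A₀ ((Submodule.Quotient.mk : P → P ⧸ posSMulSubmodule 𝒜 P) '' (ℳ κ : Set P))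

/-- `F^λ P`: the `A`-submodule generated by homogeneous elements of degree at most `λ`. -/
def filtration {A : Type u} [Ring A] (P : Type u) [AddCommGroup P] [Module A P]
    (ℳ : ℤ → AddSubgroup P) (lam : ℤ) : Submodule A P :=
  Submodule.span A {x : P | ∃ ω ≤ lam, x ∈ ℳ ω}

set_option linter.unusedSectionVars false
set_option synthInstance.maxHeartbeats 1000000
set_option maxHeartbeats 1000000

noncomputable section

namespace FQI
open DirectSum

section Components
variable {A : Type u} [Ring A] (𝒜 : ℤ → AddSubgroup A) [GradedRing 𝒜]
variable {P : Type u} [AddCommGroup P] [Module A P] (ℳ : ℤ → AddSubgroup P)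
  [DirectSum.Decomposition ℳ] [SetLike.GradedSMul 𝒜 ℳ]

noncomputable def compP (d : ℤ) : P →+ P where
  toFun p := (DirectSum.decompose ℳ p d : P)
  map_add' := by intros; simp
  map_zero' := by simp

lemma compP_apply (d : ℤ) (p : P) : compP ℳ d p = (DirectSum.decompose ℳ p d : P) := rfl

lemma compP_of_mem_same {d : ℤ} {p : P} (hp : p ∈ ℳ d) : compP ℳ d p = p :=
  DirectSum.decompose_of_mem_same ℳ hp

lemma compP_of_mem_ne {i d : ℤ} {p : P} (hp : p ∈ ℳ i) (h : i ≠ d) : compP ℳ d p = 0 :=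
  DirectSum.decompose_of_mem_ne ℳ hp h

lemma compP_mem (d : ℤ) (p : P) : compP ℳ d p ∈ ℳ d := (DirectSum.decompose ℳ p d).2

lemma compP_smul_homog (a : A) {m : ℤ} {p : P} (hp : p ∈ ℳ m) (d : ℤ) :
    compP ℳ d (a • p) = (compP 𝒜 (d - m) a) • p := by
  classical
  conv_lhs => rw [← DirectSum.sum_support_decompose 𝒜 a]
  rw [Finset.sum_smul, map_sum]
  rw [Finset.sum_eq_single (d - m)]
  · have : ((DirectSum.decompose 𝒜 a (d-m) : A)) • p ∈ ℳ d := by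
      have := SetLike.GradedSMul.smul_mem (A := 𝒜) (B := ℳ)
        (DirectSum.decompose 𝒜 a (d-m)).2 hp
      simpa [sub_add_cancel] using this
    exact compP_of_mem_same ℳ this
  · intro n _ hn
    have : ((DirectSum.decompose 𝒜 a n : A)) • p ∈ ℳ (n + m) :=
      SetLike.GradedSMul.smul_mem (A := 𝒜) (B := ℳ) (DirectSum.decompose 𝒜 a n).2 hp
    exact compP_of_mem_ne ℳ this (by omega)
  · intro h
    have : (DirectSum.decompose 𝒜 a (d - m) : A) = 0 := by
      simpa using DFinsupp.notMem_support_iff.mp h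
    rw [this, zero_smul, map_zero]

lemma compP_smul_homog' {a : A} {n : ℤ} (ha : a ∈ 𝒜 n) (p : P) (d : ℤ) :
    compP ℳ d (a • p) = a • compP ℳ (d - n) p := by
  classical
  conv_lhs => rw [← DirectSum.sum_support_decompose ℳ p]
  rw [Finset.smul_sum, map_sum]
  rw [Finset.sum_eq_single (d - n)]
  · have : a • ((DirectSum.decompose ℳ p (d-n) : P)) ∈ ℳ d := by
      have := SetLike.GradedSMul.smul_mem (A := 𝒜) (B := ℳ) ha
        (DirectSum.decompose ℳ p (d-n)).2
      simpa [add_sub_cancel] using this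
    exact compP_of_mem_same ℳ this
  · intro m _ hm
    have : a • ((DirectSum.decompose ℳ p m : P)) ∈ ℳ (n + m) :=
      SetLike.GradedSMul.smul_mem (A := 𝒜) (B := ℳ) ha (DirectSum.decompose ℳ p m).2
    exact compP_of_mem_ne ℳ this (by omega)
  · intro h
    have : (DirectSum.decompose ℳ p (d - n) : P) = 0 := by
      simpa using DFinsupp.notMem_support_iff.mp h
    rw [this, smul_zero, map_zero]

lemma compP_sum (p : P) : ∃ S : Finset ℤ, (∀ d ∉ S, compP ℳ d p = 0) ∧
    (∑ d ∈ S, compP ℳ d p) = p := by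
  classical
  refine ⟨(DirectSum.decompose ℳ p).support, fun d hd => ?_, ?_⟩
  · simpa [compP_apply] using DFinsupp.notMem_support_iff.mp hd
  · exact DirectSum.sum_support_decompose ℳ p

end Components

section PosCl
variable {A : Type u} [Ring A] (𝒜 : ℤ → AddSubgroup A) [GradedRing 𝒜]
  (hsupp : ∀ n : ℤ, n < 0 → 𝒜 n = ⊥)
include hsupp

lemma compA_neg_zero {j : ℤ} (hj : j < 0) (c : A) : compP 𝒜 j c = 0 := by
  have := compP_mem 𝒜 j c
  rw [hsupp j hj] at this
  exact this

variable (P : Type u) [AddCommGroup P] [Module A P]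

def posGen : Set P := {x : P | ∃ n : ℤ, 0 < n ∧ ∃ a ∈ 𝒜 n, ∃ p : P, x = a • p}

lemma posSMul_def : posSMulSubmodule 𝒜 P = Submodule.span A (posGen 𝒜 P) := rfl

variable {P}

lemma smul_mem_posCl (c : A) {x : P}
    (hx : x ∈ AddSubgroup.closure (posGen 𝒜 P)) :
    c • x ∈ AddSubgroup.closure (posGen 𝒜 P) := by
  classical
  induction hx using AddSubgroup.closure_induction with
  | mem x hxg =>
    obtain ⟨n, hn, a, ha, p, rfl⟩ := hxg
    rw [smul_smul]
    obtain ⟨S, hS0, hSsum⟩ := compP_sum 𝒜 (c * a)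
    have : (c * a) • p = ∑ m ∈ S, (compP 𝒜 m (c * a)) • p := by
      rw [← Finset.sum_smul, hSsum]
    rw [this]
    refine AddSubgroup.sum_mem _ (fun m _ => ?_)
    by_cases hm : 0 < m
    · exact AddSubgroup.subset_closure ⟨m, hm, _, compP_mem 𝒜 m _, p, rfl⟩
    · have : compP 𝒜 m (c * a) = 0 := by
        have : compP 𝒜 m (c • a) = compP 𝒜 (m - n) c • a := compP_smul_homog 𝒜 𝒜 c ha m
        rw [smul_eq_mul] at this
        rw [this, compA_neg_zero 𝒜 hsupp (by omega), zero_smul]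
      rw [this, zero_smul]
      exact zero_mem _
  | zero => simpa using zero_mem _
  | add x y _ _ hx hy => rw [smul_add]; exact add_mem hx hy
  | neg x _ hx => rw [smul_neg]; exact neg_mem hx

lemma mem_posSMul_iff {x : P} :
    x ∈ posSMulSubmodule 𝒜 P ↔ x ∈ AddSubgroup.closure (posGen 𝒜 P) := by
  constructor
  · intro hx
    induction hx using Submodule.span_induction with
    | mem x h => exact AddSubgroup.subset_closure h
    | zero => exact zero_mem _
    | add x y _ _ hx hy => exact add_mem hx hy
    | smul c x _ hx => exact smul_mem_posCl 𝒜 hsupp c hx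
  · intro hx
    induction hx using AddSubgroup.closure_induction with
    | mem x h => exact Submodule.subset_span h
    | zero => exact zero_mem _
    | add x y _ _ hx hy => exact add_mem hx hy
    | neg x _ hx => exact neg_mem hx

end PosCl

section Filt
variable {A : Type u} [Ring A] (𝒜 : ℤ → AddSubgroup A) [GradedRing 𝒜]
  (hsupp : ∀ n : ℤ, n < 0 → 𝒜 n = ⊥)
variable {P : Type u} [AddCommGroup P] [Module A P] (ℳ : ℤ → AddSubgroup P)
  [DirectSum.Decomposition ℳ] [SetLike.GradedSMul 𝒜 ℳ]

lemma mem_filtration_of_mem {ω lam : ℤ} (h : ω ≤ lam) {p : P} (hp : p ∈ ℳ ω) :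
    p ∈ filtration (A := A) P ℳ lam := Submodule.subset_span ⟨ω, h, hp⟩

lemma filtration_mono {l l' : ℤ} (h : l ≤ l') : filtration (A := A) P ℳ l ≤ filtration (A := A) P ℳ l' :=
  Submodule.span_mono (fun x => fun ⟨ω, hω, hx⟩ => ⟨ω, le_trans hω h, hx⟩)

include hsupp in
lemma compP_posSMul {x : P} (hx : x ∈ posSMulSubmodule 𝒜 P) (d : ℤ) :
    compP ℳ d x ∈ filtration (A := A) P ℳ (d - 1) := by
  rw [mem_posSMul_iff 𝒜 hsupp] at hx
  induction hx using AddSubgroup.closure_induction with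
  | mem x h =>
    obtain ⟨n, hn, a, ha, p, rfl⟩ := h
    rw [compP_smul_homog' 𝒜 ℳ ha]
    exact Submodule.smul_mem _ a (mem_filtration_of_mem ℳ (by omega) (compP_mem ℳ _ p))
  | zero => rw [map_zero]; exact zero_mem _
  | add x y _ _ hx hy => rw [map_add]; exact add_mem hx hy
  | neg x _ hx => rw [map_neg]; exact neg_mem hx

include hsupp in
lemma mem_filtration_of_posSMul {d : ℤ} {x : P} (hx1 : x ∈ ℳ d)
    (hx2 : x ∈ posSMulSubmodule 𝒜 P) : x ∈ filtration (A := A) P ℳ (d - 1) := by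
  rw [← compP_of_mem_same ℳ hx1]
  exact compP_posSMul 𝒜 hsupp ℳ hx2 d

variable (A₀ : Subring A) (hA₀ : (A₀ : Set A) = (𝒜 0 : Set A))

include hA₀ in
lemma A0_mem (a : A₀) : (a : A) ∈ 𝒜 0 := by
  have : (a : A) ∈ (A₀ : Set A) := a.2
  rw [hA₀] at this; exact this

include hA₀ in
lemma smul_mem_M {κ : ℤ} (a : A₀) {p : P} (hp : p ∈ ℳ κ) : (a : A) • p ∈ ℳ κ := by
  have := SetLike.GradedSMul.smul_mem (A := 𝒜) (B := ℳ) (A0_mem 𝒜 A₀ hA₀ a) hp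
  simpa using this

include hA₀ in
lemma mem_TSub_iff {κ : ℤ} {t : P ⧸ posSMulSubmodule 𝒜 P} :
    t ∈ TSub 𝒜 A₀ P ℳ κ ↔ ∃ p ∈ ℳ κ,
      (Submodule.Quotient.mk p : P ⧸ posSMulSubmodule 𝒜 P) = t := by
  constructor
  · intro ht
    induction ht using Submodule.span_induction with
    | mem x h => obtain ⟨p, hp, rfl⟩ := h; exact ⟨p, hp, rfl⟩
    | zero => exact ⟨0, zero_mem _, by simp⟩
    | add x y _ _ hx hy =>
      obtain ⟨p, hp, rfl⟩ := hx; obtain ⟨q, hq, rfl⟩ := hy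
      exact ⟨p + q, add_mem hp hq, by simp⟩
    | smul a x _ hx =>
      obtain ⟨p, hp, rfl⟩ := hx
      refine ⟨(a : A) • p, smul_mem_M 𝒜 ℳ A₀ hA₀ a hp, ?_⟩
      rw [Submodule.Quotient.mk_smul]
      rfl
  · rintro ⟨p, hp, rfl⟩
    exact Submodule.subset_span ⟨p, hp, rfl⟩

lemma mk_mem_TSub {κ : ℤ} {p : P} (hp : p ∈ ℳ κ) :
    (Submodule.Quotient.mk p : P ⧸ posSMulSubmodule 𝒜 P) ∈ TSub 𝒜 A₀ P ℳ κ :=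
  Submodule.subset_span ⟨p, hp, rfl⟩

include hsupp in
lemma exists_d₀ [Module.Finite A P] :
    ∃ d₀ : ℤ, ∀ ω : ℤ, ω < d₀ → ∀ p ∈ ℳ ω, p = 0 := by
  classical
  obtain ⟨s, hs⟩ : ∃ s : Finset P, Submodule.span A (s : Set P) = ⊤ := Module.Finite.fg_top
  set Sfin : Finset ℤ := s.biUnion (fun p => (DirectSum.decompose ℳ p).support) with hSfin
  obtain ⟨d₀, hd₀⟩ : ∃ d₀ : ℤ, ∀ j ∈ Sfin, d₀ ≤ j := by
    by_cases h : Sfin.Nonempty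
    · exact ⟨Sfin.min' h, fun j hj => Finset.min'_le _ j hj⟩
    · exact ⟨0, fun j hj => absurd ⟨j, hj⟩ h⟩
  refine ⟨d₀, fun ω hω p hp => ?_⟩
  set B : Submodule A P :=
    { carrier := {p : P | ∀ j : ℤ, j < d₀ → compP ℳ j p = 0}
      add_mem' := fun hx hy j hj => by
        rw [map_add, hx j hj, hy j hj, add_zero]
      zero_mem' := fun j hj => map_zero _
      smul_mem' := by
        intro c p hp j hj
        obtain ⟨S, hS0, hSsum⟩ := compP_sum ℳ p
        have : c • p = ∑ m ∈ S, c • compP ℳ m p := by rw [← Finset.smul_sum, hSsum]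
        rw [this, map_sum]
        refine Finset.sum_eq_zero (fun m _ => ?_)
        by_cases hm : m < d₀
        · rw [hp m hm, smul_zero, map_zero]
        · rw [compP_smul_homog 𝒜 ℳ c (compP_mem ℳ m p) j,
            compA_neg_zero 𝒜 hsupp (by omega), zero_smul] } with hB
  have hsB : (s : Set P) ⊆ (B : Set P) := by
    intro x hx j hj
    have : j ∉ (DirectSum.decompose ℳ x).support := by
      intro hmem
      have : d₀ ≤ j := hd₀ j (Finset.mem_biUnion.mpr ⟨x, hx, hmem⟩)
      omega
    simpa [compP_apply] using DFinsupp.notMem_support_iff.mp this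
  have hB_top : ∀ q : P, q ∈ B := by
    intro q
    have : q ∈ Submodule.span A (s : Set P) := by rw [hs]; trivial
    exact Submodule.span_le.mpr hsB this
  have := hB_top p ω hω
  rwa [compP_of_mem_same ℳ hp] at this

include hsupp hA₀ in
lemma TSub_eq_bot [Module.Finite A P] {d₀ : ℤ}
    (hd₀ : ∀ ω : ℤ, ω < d₀ → ∀ p ∈ ℳ ω, p = 0) {κ : ℤ} (hκ : κ < d₀)
    {t : P ⧸ posSMulSubmodule 𝒜 P} (ht : t ∈ TSub 𝒜 A₀ P ℳ κ) : t = 0 := by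
  obtain ⟨p, hp, rfl⟩ := (mem_TSub_iff 𝒜 ℳ A₀ hA₀).mp ht
  rw [hd₀ κ hκ p hp]
  simp

end Filt


section QCon
variable {A : Type u} [Ring A] (𝒜 : ℤ → AddSubgroup A) [GradedRing 𝒜]
  (A₀ : Subring A)
variable (P : Type u) [AddCommGroup P] [Module A P] (ℳ : ℤ → AddSubgroup P)
  [DirectSum.Decomposition ℳ] [SetLike.GradedSMul 𝒜 ℳ]

abbrev SIdx : Type u := Σ κ : ℤ, (TSub 𝒜 A₀ P ℳ κ)

abbrev XF : Type u := SIdx 𝒜 A₀ P ℳ →₀ A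

/-- relations defining the base change `⊕_κ A ⊗_{A₀} T(P)_κ` -/
def RRel : Submodule A (XF 𝒜 A₀ P ℳ) :=
  Submodule.span A
    ({x : XF 𝒜 A₀ P ℳ | ∃ (κ : ℤ) (t t' : TSub 𝒜 A₀ P ℳ κ),
        x = Finsupp.single ⟨κ, t + t'⟩ (1:A) - Finsupp.single ⟨κ, t⟩ (1:A)
            - Finsupp.single ⟨κ, t'⟩ (1:A)} ∪
     {x : XF 𝒜 A₀ P ℳ | ∃ (κ : ℤ) (t : TSub 𝒜 A₀ P ℳ κ) (a₀ : A₀),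
        x = Finsupp.single ⟨κ, a₀ • t⟩ (1:A) - Finsupp.single ⟨κ, t⟩ (a₀ : A)})

abbrev QM : Type u := XF 𝒜 A₀ P ℳ ⧸ RRel 𝒜 A₀ P ℳ

/-- the canonical generators of `QM` -/
def eQ (κ : ℤ) (t : TSub 𝒜 A₀ P ℳ κ) : QM 𝒜 A₀ P ℳ :=
  Submodule.Quotient.mk (Finsupp.single ⟨κ, t⟩ (1:A))

lemma mk_single (κ : ℤ) (t : TSub 𝒜 A₀ P ℳ κ) (a : A) :
    (Submodule.Quotient.mk (Finsupp.single ⟨κ, t⟩ a) : QM 𝒜 A₀ P ℳ) = a • eQ 𝒜 A₀ P ℳ κ t := by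
  rw [eQ, ← Submodule.Quotient.mk_smul, Finsupp.smul_single, smul_eq_mul, mul_one]

lemma eQ_add (κ : ℤ) (t t' : TSub 𝒜 A₀ P ℳ κ) :
    eQ 𝒜 A₀ P ℳ κ (t + t') = eQ 𝒜 A₀ P ℳ κ t + eQ 𝒜 A₀ P ℳ κ t' := by
  rw [eQ, eQ, eQ, ← Submodule.Quotient.mk_add, Submodule.Quotient.eq]
  refine Submodule.subset_span (Or.inl ⟨κ, t, t', ?_⟩)
  abel

lemma eQ_smul (κ : ℤ) (a₀ : A₀) (t : TSub 𝒜 A₀ P ℳ κ) :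
    eQ 𝒜 A₀ P ℳ κ (a₀ • t) = (a₀ : A) • eQ 𝒜 A₀ P ℳ κ t := by
  rw [eQ, ← mk_single, Submodule.Quotient.eq]
  exact Submodule.subset_span (Or.inr ⟨κ, t, a₀, rfl⟩)

lemma eQ_zero (κ : ℤ) : eQ 𝒜 A₀ P ℳ κ 0 = 0 := by
  have := eQ_add 𝒜 A₀ P ℳ κ 0 0
  rw [add_zero] at this
  exact left_eq_add.mp this

lemma eQ_neg (κ : ℤ) (t : TSub 𝒜 A₀ P ℳ κ) :
    eQ 𝒜 A₀ P ℳ κ (-t) = - eQ 𝒜 A₀ P ℳ κ t := by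
  have := eQ_add 𝒜 A₀ P ℳ κ t (-t)
  rw [add_neg_cancel, eQ_zero] at this
  linear_combination (norm := abel) this.symm

/-- universal property: a family of `A₀`-linear maps on the `T(P)_κ` induces an
`A`-linear map on `QM`. -/
def liftQM {N : Type u} [AddCommGroup N] [Module A N]
    (f : ∀ κ : ℤ, TSub 𝒜 A₀ P ℳ κ →ₗ[A₀] N) : QM 𝒜 A₀ P ℳ →ₗ[A] N :=
  Submodule.liftQ (RRel 𝒜 A₀ P ℳ)
    (Finsupp.linearCombination A (fun s : SIdx 𝒜 A₀ P ℳ => f s.1 s.2))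
    (by
      rw [RRel, Submodule.span_le]
      rintro x (⟨κ, t, t', rfl⟩ | ⟨κ, t, a₀, rfl⟩) <;>
        simp only [SetLike.mem_coe, LinearMap.mem_ker, map_sub,
          Finsupp.linearCombination_single, one_smul]
      · rw [map_add]; abel
      · rw [map_smul]
        have h : a₀ • ((f κ) t) = (a₀ : A) • ((f κ) t) := rfl
        rw [h, sub_self])

lemma liftQM_e {N : Type u} [AddCommGroup N] [Module A N]
    (f : ∀ κ : ℤ, TSub 𝒜 A₀ P ℳ κ →ₗ[A₀] N) (κ : ℤ) (t : TSub 𝒜 A₀ P ℳ κ) :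
    liftQM 𝒜 A₀ P ℳ f (eQ 𝒜 A₀ P ℳ κ t) = f κ t := by
  rw [liftQM, eQ, Submodule.liftQ_apply, Finsupp.linearCombination_single, one_smul]

lemma liftQM_mk {N : Type u} [AddCommGroup N] [Module A N]
    (f : ∀ κ : ℤ, TSub 𝒜 A₀ P ℳ κ →ₗ[A₀] N) (x : XF 𝒜 A₀ P ℳ) :
    liftQM 𝒜 A₀ P ℳ f (Submodule.Quotient.mk x) =
      Finsupp.linearCombination A (fun s : SIdx 𝒜 A₀ P ℳ => f s.1 s.2) x := by
  rw [liftQM, Submodule.liftQ_apply]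

/-- the evaluation map `QM → P` induced by a section `g` -/
def ΦQ (g : (P ⧸ posSMulSubmodule 𝒜 P) →ₗ[A₀] P) : QM 𝒜 A₀ P ℳ →ₗ[A] P :=
  liftQM 𝒜 A₀ P ℳ (fun κ => g.comp (TSub 𝒜 A₀ P ℳ κ).subtype)

lemma ΦQ_e (g : (P ⧸ posSMulSubmodule 𝒜 P) →ₗ[A₀] P) (κ : ℤ) (t : TSub 𝒜 A₀ P ℳ κ) :
    ΦQ 𝒜 A₀ P ℳ g (eQ 𝒜 A₀ P ℳ κ t) = g (t : P ⧸ posSMulSubmodule 𝒜 P) :=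
  liftQM_e 𝒜 A₀ P ℳ _ κ t

variable (hsupp : ∀ n : ℤ, n < 0 → 𝒜 n = ⊥) (hA₀ : (A₀ : Set A) = (𝒜 0 : Set A))

/-- degree-zero part of a ring element, as an element of `A₀` -/
def pz (a : A) : A₀ := ⟨compP 𝒜 0 a, by
  have : compP 𝒜 0 a ∈ (A₀ : Set A) := by rw [hA₀]; exact compP_mem 𝒜 0 a
  exact this⟩

lemma pz_coe (a : A) : (pz 𝒜 A₀ hA₀ a : A) = compP 𝒜 0 a := rfl

lemma pz_add (a b : A) : pz 𝒜 A₀ hA₀ (a + b) = pz 𝒜 A₀ hA₀ a + pz 𝒜 A₀ hA₀ b := by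
  apply Subtype.ext; simp [pz_coe, map_add]

/-- the "degree-wise leading term" map -/
def ρf : XF 𝒜 A₀ P ℳ →+ (ℤ →₀ QM 𝒜 A₀ P ℳ) :=
  Finsupp.liftAddHom (fun s =>
    { toFun := fun a => Finsupp.single s.1 (eQ 𝒜 A₀ P ℳ s.1 (pz 𝒜 A₀ hA₀ a • s.2))
      map_zero' := by
        have h : pz 𝒜 A₀ hA₀ 0 = 0 := by apply Subtype.ext; simp [pz_coe]
        rw [h, zero_smul, eQ_zero, Finsupp.single_zero]
      map_add' := fun a b => by
        rw [pz_add, add_smul, eQ_add, Finsupp.single_add] })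

lemma ρf_single (s : SIdx 𝒜 A₀ P ℳ) (a : A) :
    ρf 𝒜 A₀ P ℳ hA₀ (Finsupp.single s a)
      = Finsupp.single s.1 (eQ 𝒜 A₀ P ℳ s.1 (pz 𝒜 A₀ hA₀ a • s.2)) :=
  Finsupp.liftAddHom_apply_single _ s a

/-- summation of the values -/
def ρsum : XF 𝒜 A₀ P ℳ →+ QM 𝒜 A₀ P ℳ :=
  (Finsupp.liftAddHom (fun _ : ℤ => AddMonoidHom.id (QM 𝒜 A₀ P ℳ))).comp
    (ρf 𝒜 A₀ P ℳ hA₀)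

/-- the image in `T(P)` of the degree-`d` leading coefficients -/
def σf : XF 𝒜 A₀ P ℳ →+ (ℤ →₀ (P ⧸ posSMulSubmodule 𝒜 P)) :=
  Finsupp.liftAddHom (fun s =>
    { toFun := fun a => Finsupp.single s.1
        ((compP 𝒜 0 a : A) • (s.2 : P ⧸ posSMulSubmodule 𝒜 P))
      map_zero' := by rw [map_zero, zero_smul, Finsupp.single_zero]
      map_add' := fun a b => by rw [map_add, add_smul, Finsupp.single_add] })

lemma σf_single (s : SIdx 𝒜 A₀ P ℳ) (a : A) :
    σf 𝒜 A₀ P ℳ (Finsupp.single s a)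
      = Finsupp.single s.1 ((compP 𝒜 0 a : A) • (s.2 : P ⧸ posSMulSubmodule 𝒜 P)) :=
  Finsupp.liftAddHom_apply_single _ s a

variable (g : (P ⧸ posSMulSubmodule 𝒜 P) →ₗ[A₀] P)
  (hgsec : ∀ t, Submodule.Quotient.mk (g t) = t)
  (hggr : ∀ (n : ℤ) (t : P ⧸ posSMulSubmodule 𝒜 P), t ∈ TSub 𝒜 A₀ P ℳ n → g t ∈ ℳ n)

include hsupp hgsec hggr in
lemma Hκ (x : XF 𝒜 A₀ P ℳ) (d : ℤ) :
    σf 𝒜 A₀ P ℳ x d =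
      Submodule.Quotient.mk (compP ℳ d (ΦQ 𝒜 A₀ P ℳ g (Submodule.Quotient.mk x))) := by
  classical
  induction x using Finsupp.induction with
  | zero => simp
  | single_add s a f _ _ ih =>
    rw [map_add, Finsupp.add_apply, ih, Submodule.Quotient.mk_add, map_add, map_add,
      Submodule.Quotient.mk_add]
    congr 1
    obtain ⟨κ, t⟩ := s
    rw [σf_single]
    have hΦ : ΦQ 𝒜 A₀ P ℳ g (Submodule.Quotient.mk (Finsupp.single ⟨κ, t⟩ a))
        = a • g (t : P ⧸ posSMulSubmodule 𝒜 P) := by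
      rw [mk_single, map_smul, ΦQ_e]
    rw [hΦ, compP_smul_homog 𝒜 ℳ a (hggr κ _ t.2) d]
    by_cases hd : κ = d
    · subst hd
      rw [Finsupp.single_apply, if_pos rfl, sub_self, Submodule.Quotient.mk_smul, hgsec]
    · rw [Finsupp.single_apply, if_neg hd]
      rcases lt_trichotomy (d - κ) 0 with h | h | h
      · rw [compA_neg_zero 𝒜 hsupp h, zero_smul]; simp
      · omega
      · symm
        rw [Submodule.Quotient.mk_eq_zero]
        exact Submodule.subset_span ⟨d - κ, h, _, compP_mem 𝒜 _ a, _, rfl⟩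

include hA₀ in
lemma rho_sigma (x : XF 𝒜 A₀ P ℳ) :
    ∀ d : ℤ, ∃ s : TSub 𝒜 A₀ P ℳ d,
      (s : P ⧸ posSMulSubmodule 𝒜 P) = σf 𝒜 A₀ P ℳ x d ∧
      ρf 𝒜 A₀ P ℳ hA₀ x d = eQ 𝒜 A₀ P ℳ d s := by
  classical
  induction x using Finsupp.induction with
  | zero => exact fun d => ⟨0, by simp, by simp [eQ_zero]⟩
  | single_add s a f _ _ ih =>
    intro d
    obtain ⟨s₂, hs₂, hr₂⟩ := ih d
    obtain ⟨κ, t⟩ := s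
    by_cases hd : κ = d
    · subst hd
      refine ⟨pz 𝒜 A₀ hA₀ a • t + s₂, ?_, ?_⟩
      · rw [map_add, Finsupp.add_apply, σf_single]
        push_cast
        rw [hs₂, Finsupp.single_apply, if_pos rfl]
        rfl
      · rw [map_add, Finsupp.add_apply, ρf_single, hr₂, eQ_add,
          Finsupp.single_apply, if_pos rfl]
    · refine ⟨s₂, ?_, ?_⟩
      · rw [map_add, Finsupp.add_apply, σf_single, hs₂, Finsupp.single_apply, if_neg hd,
          zero_add]
      · rw [map_add, Finsupp.add_apply, ρf_single, hr₂, Finsupp.single_apply, if_neg hd,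
          zero_add]

include hsupp in
lemma smul_posCl_of_deg0_eq_zero {c : A} (hc : compP 𝒜 0 c = 0)
    {N : Type u} [AddCommGroup N] [Module A N] (q : N) :
    c • q ∈ AddSubgroup.closure (posGen 𝒜 N) := by
  obtain ⟨S, hS0, hSsum⟩ := compP_sum 𝒜 c
  have : c • q = ∑ m ∈ S, (compP 𝒜 m c) • q := by rw [← Finset.sum_smul, hSsum]
  rw [this]
  refine AddSubgroup.sum_mem _ (fun m _ => ?_)
  rcases lt_trichotomy m 0 with h | h | h
  · rw [compA_neg_zero 𝒜 hsupp h, zero_smul]; exact zero_mem _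
  · subst h; rw [hc, zero_smul]; exact zero_mem _
  · exact AddSubgroup.subset_closure ⟨m, h, _, compP_mem 𝒜 m c, q, rfl⟩

include hsupp hA₀ in
lemma mk_sub_ρsum_mem (x : XF 𝒜 A₀ P ℳ) :
    (Submodule.Quotient.mk x : QM 𝒜 A₀ P ℳ) - ρsum 𝒜 A₀ P ℳ hA₀ x
      ∈ AddSubgroup.closure (posGen 𝒜 (QM 𝒜 A₀ P ℳ)) := by
  classical
  induction x using Finsupp.induction with
  | zero => simp
  | single_add s a f _ _ ih =>
    have : (Submodule.Quotient.mk (Finsupp.single s a + f) : QM 𝒜 A₀ P ℳ)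
        - ρsum 𝒜 A₀ P ℳ hA₀ (Finsupp.single s a + f)
        = ((Submodule.Quotient.mk (Finsupp.single s a) : QM 𝒜 A₀ P ℳ)
            - ρsum 𝒜 A₀ P ℳ hA₀ (Finsupp.single s a))
          + ((Submodule.Quotient.mk f : QM 𝒜 A₀ P ℳ) - ρsum 𝒜 A₀ P ℳ hA₀ f) := by
      rw [Submodule.Quotient.mk_add, map_add]; abel
    rw [this]
    refine add_mem ?_ ih
    obtain ⟨κ, t⟩ := s
    have hρ : ρsum 𝒜 A₀ P ℳ hA₀ (Finsupp.single ⟨κ, t⟩ a)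
        = eQ 𝒜 A₀ P ℳ κ (pz 𝒜 A₀ hA₀ a • t) := by
      rw [ρsum, AddMonoidHom.comp_apply, ρf_single]
      exact Finsupp.liftAddHom_apply_single (fun _ : ℤ => AddMonoidHom.id _) _ _
    rw [hρ, mk_single, eQ_smul, pz_coe, ← sub_smul]
    refine smul_posCl_of_deg0_eq_zero 𝒜 hsupp ?_ _
    rw [map_sub, compP_of_mem_same 𝒜 (compP_mem 𝒜 0 a), sub_self]

include hsupp hA₀ hgsec hggr in
lemma ker_sub_posCl {q : QM 𝒜 A₀ P ℳ} (hq : ΦQ 𝒜 A₀ P ℳ g q = 0) :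
    q ∈ AddSubgroup.closure (posGen 𝒜 (QM 𝒜 A₀ P ℳ)) := by
  obtain ⟨x, rfl⟩ := Submodule.Quotient.mk_surjective _ q
  have hσ : ∀ d, σf 𝒜 A₀ P ℳ x d = 0 := by
    intro d
    rw [Hκ 𝒜 A₀ P ℳ hsupp g hgsec hggr x d, hq]
    simp
  have hρ : ρf 𝒜 A₀ P ℳ hA₀ x = 0 := by
    ext d
    obtain ⟨s, hs, hr⟩ := rho_sigma 𝒜 A₀ P ℳ hA₀ x d
    rw [hσ d] at hs
    have : s = 0 := by
      apply Subtype.ext; exact hs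
    rw [hr, this, eQ_zero]
    rfl
  have hρs : ρsum 𝒜 A₀ P ℳ hA₀ x = 0 := by
    rw [ρsum, AddMonoidHom.comp_apply, hρ, map_zero]
  have := mk_sub_ρsum_mem 𝒜 A₀ P ℳ hsupp hA₀ x
  rwa [hρs, sub_zero] at this

/-! ### the degree filtration on `QM` and the degree projections -/

/-- homogeneous generators of degree at least `m`, upstairs -/
def SxSet (m : ℤ) : Set (XF 𝒜 A₀ P ℳ) :=
  {x | ∃ (κ : ℤ) (t : TSub 𝒜 A₀ P ℳ κ) (j : ℤ) (a : A),
    a ∈ 𝒜 j ∧ m ≤ j + κ ∧ x = Finsupp.single ⟨κ, t⟩ a}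

/-- the subgroup of elements of degree at least `m` -/
def Qge (m : ℤ) : AddSubgroup (QM 𝒜 A₀ P ℳ) :=
  AddSubgroup.closure
    ((Submodule.Quotient.mk : XF 𝒜 A₀ P ℳ → QM 𝒜 A₀ P ℳ) '' SxSet 𝒜 A₀ P ℳ m)

lemma smul_eQ_mem_Qge {m j κ : ℤ} {a : A} (ha : a ∈ 𝒜 j) (hm : m ≤ j + κ)
    (t : TSub 𝒜 A₀ P ℳ κ) : a • eQ 𝒜 A₀ P ℳ κ t ∈ Qge 𝒜 A₀ P ℳ m := by
  refine AddSubgroup.subset_closure ⟨Finsupp.single ⟨κ, t⟩ a, ⟨κ, t, j, a, ha, hm, rfl⟩, ?_⟩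
  rw [mk_single]

lemma Qge_mono {m m' : ℤ} (h : m' ≤ m) : Qge 𝒜 A₀ P ℳ m ≤ Qge 𝒜 A₀ P ℳ m' :=
  AddSubgroup.closure_mono (Set.image_mono (fun x ⟨κ, t, j, a, ha, hm, hx⟩ =>
    ⟨κ, t, j, a, ha, le_trans h hm, hx⟩))

include hsupp hA₀ in
lemma Qge_top [Module.Finite A P] {d₀ : ℤ} (hd₀ : ∀ ω : ℤ, ω < d₀ → ∀ p ∈ ℳ ω, p = 0)
    {m : ℤ} (hm : m ≤ d₀) (q : QM 𝒜 A₀ P ℳ) : q ∈ Qge 𝒜 A₀ P ℳ m := by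
  classical
  obtain ⟨x, rfl⟩ := Submodule.Quotient.mk_surjective _ q
  induction x using Finsupp.induction with
  | zero => simp
  | single_add s a f _ _ ih =>
    rw [Submodule.Quotient.mk_add]
    refine add_mem ?_ ih
    obtain ⟨κ, t⟩ := s
    rw [mk_single]
    by_cases hκ : κ < d₀
    · have ht : t = 0 := Subtype.ext
        (TSub_eq_bot 𝒜 hsupp ℳ A₀ hA₀ hd₀ hκ t.2)
      rw [ht, eQ_zero, smul_zero]
      exact zero_mem _
    · obtain ⟨S, hS0, hSsum⟩ := compP_sum 𝒜 a
      have : a • eQ 𝒜 A₀ P ℳ κ t = ∑ j ∈ S, compP 𝒜 j a • eQ 𝒜 A₀ P ℳ κ t := by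
        rw [← Finset.sum_smul, hSsum]
      rw [this]
      refine AddSubgroup.sum_mem _ (fun j _ => ?_)
      by_cases hj : j < 0
      · rw [compA_neg_zero 𝒜 hsupp hj, zero_smul]; exact zero_mem _
      · exact smul_eQ_mem_Qge 𝒜 A₀ P ℳ (compP_mem 𝒜 j a) (by omega) t

lemma smul_Qge {n : ℤ} {a : A} (ha : a ∈ 𝒜 n) {m : ℤ} {x : QM 𝒜 A₀ P ℳ}
    (hx : x ∈ Qge 𝒜 A₀ P ℳ m) : a • x ∈ Qge 𝒜 A₀ P ℳ (m + n) := by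
  induction hx using AddSubgroup.closure_induction with
  | mem y hy =>
    obtain ⟨z, ⟨κ, t, j, b, hb, hm, rfl⟩, rfl⟩ := hy
    rw [mk_single, smul_smul]
    exact smul_eQ_mem_Qge 𝒜 A₀ P ℳ (SetLike.mul_mem_graded ha hb) (by omega) t
  | zero => rw [smul_zero]; exact zero_mem _
  | add y z _ _ hy hz => rw [smul_add]; exact add_mem hy hz
  | neg y _ hy => rw [smul_neg]; exact neg_mem hy

include hsupp hA₀ hgsec hggr in
lemma ker_Qge [Module.Finite A P] {d₀ : ℤ}
    (hd₀ : ∀ ω : ℤ, ω < d₀ → ∀ p ∈ ℳ ω, p = 0)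
    (σ : P →ₗ[A] QM 𝒜 A₀ P ℳ) (hσ : (ΦQ 𝒜 A₀ P ℳ g).comp σ = LinearMap.id)
    (m : ℤ) {q : QM 𝒜 A₀ P ℳ} (hq : ΦQ 𝒜 A₀ P ℳ g q = 0) :
    q ∈ Qge 𝒜 A₀ P ℳ m := by
  set π : QM 𝒜 A₀ P ℳ →ₗ[A] QM 𝒜 A₀ P ℳ :=
    LinearMap.id - σ.comp (ΦQ 𝒜 A₀ P ℳ g) with hπ
  have hπker : ∀ y, ΦQ 𝒜 A₀ P ℳ g (π y) = 0 := by
    intro y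
    have : ΦQ 𝒜 A₀ P ℳ g (σ (ΦQ 𝒜 A₀ P ℳ g y)) = ΦQ 𝒜 A₀ P ℳ g y :=
      congrArg (fun F : P →ₗ[A] P => F (ΦQ 𝒜 A₀ P ℳ g y)) hσ
    simp [hπ, this]
  have key : ∀ n : ℕ, ∀ q : QM 𝒜 A₀ P ℳ, ΦQ 𝒜 A₀ P ℳ g q = 0 →
      q ∈ Qge 𝒜 A₀ P ℳ (d₀ + n) := by
    intro n
    induction n with
    | zero =>
      intro q hq
      exact Qge_top 𝒜 A₀ P ℳ hsupp hA₀ hd₀ (by simp) q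
    | succ n ih =>
      intro q hq
      have hqπ : π q = q := by simp [hπ, hq]
      have hcl := ker_sub_posCl 𝒜 A₀ P ℳ hsupp hA₀ g hgsec hggr hq
      have main : ∀ y ∈ AddSubgroup.closure (posGen 𝒜 (QM 𝒜 A₀ P ℳ)),
          π y ∈ Qge 𝒜 A₀ P ℳ (d₀ + (n + 1 : ℕ)) := by
        intro y hy
        induction hy using AddSubgroup.closure_induction with
        | mem z hz =>
          obtain ⟨nn, hnn, a, ha, w, rfl⟩ := hz
          rw [map_smul]
          have := smul_Qge 𝒜 A₀ P ℳ ha (ih (π w) (hπker w))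
          refine Qge_mono 𝒜 A₀ P ℳ ?_ this
          push_cast; omega
        | zero => rw [map_zero]; exact zero_mem _
        | add y z _ _ hy hz => rw [map_add]; exact add_mem hy hz
        | neg y _ hy => rw [map_neg]; exact neg_mem hy
      have := main q hcl
      rwa [hqπ] at this
  obtain ⟨n, hn⟩ : ∃ n : ℕ, m ≤ d₀ + n := ⟨(m - d₀).toNat, by omega⟩
  exact Qge_mono 𝒜 A₀ P ℳ hn (key n q hq)

/-! ### degree projections upstairs -/

/-- degree-`d` projection on `XF` -/
def Dx (d : ℤ) : XF 𝒜 A₀ P ℳ →+ XF 𝒜 A₀ P ℳ :=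
  Finsupp.liftAddHom (fun s => (Finsupp.singleAddHom s).comp (compP 𝒜 (d - s.1)))

lemma Dx_single (d : ℤ) (s : SIdx 𝒜 A₀ P ℳ) (a : A) :
    Dx 𝒜 A₀ P ℳ d (Finsupp.single s a) = Finsupp.single s (compP 𝒜 (d - s.1) a) :=
  Finsupp.liftAddHom_apply_single _ s a

include hA₀ in
lemma Dx_R {x : XF 𝒜 A₀ P ℳ} (hx : x ∈ RRel 𝒜 A₀ P ℳ) (d : ℤ) :
    Dx 𝒜 A₀ P ℳ d x ∈ RRel 𝒜 A₀ P ℳ := by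
  have main : ∀ c : A, Dx 𝒜 A₀ P ℳ d (c • x) ∈ RRel 𝒜 A₀ P ℳ := by
    induction hx using Submodule.span_induction with
    | mem y hy =>
      intro c
      rcases hy with ⟨κ, t, t', rfl⟩ | ⟨κ, t, a₀, rfl⟩
      · have hc : c • (Finsupp.single (⟨κ, t + t'⟩ : SIdx 𝒜 A₀ P ℳ) (1:A)
            - Finsupp.single ⟨κ, t⟩ (1:A) - Finsupp.single ⟨κ, t'⟩ (1:A))
            = Finsupp.single (⟨κ, t + t'⟩ : SIdx 𝒜 A₀ P ℳ) c
              - Finsupp.single ⟨κ, t⟩ c - Finsupp.single ⟨κ, t'⟩ c := by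
          rw [smul_sub, smul_sub, Finsupp.smul_single, Finsupp.smul_single,
            Finsupp.smul_single, smul_eq_mul, mul_one]
        rw [hc, map_sub, map_sub, Dx_single, Dx_single, Dx_single]
        have h2 : ∀ u : TSub 𝒜 A₀ P ℳ κ,
            Finsupp.single (⟨κ, u⟩ : SIdx 𝒜 A₀ P ℳ) (compP 𝒜 (d - κ) c)
            = compP 𝒜 (d - κ) c • Finsupp.single (⟨κ, u⟩ : SIdx 𝒜 A₀ P ℳ) (1:A) := by
          intro u; rw [Finsupp.smul_single, smul_eq_mul, mul_one]
        rw [h2, h2, h2, ← smul_sub, ← smul_sub]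
        exact Submodule.smul_mem _ _ (Submodule.subset_span (Or.inl ⟨κ, t, t', rfl⟩))
      · have hc : c • (Finsupp.single (⟨κ, a₀ • t⟩ : SIdx 𝒜 A₀ P ℳ) (1:A)
            - Finsupp.single ⟨κ, t⟩ (a₀ : A))
            = Finsupp.single (⟨κ, a₀ • t⟩ : SIdx 𝒜 A₀ P ℳ) c
              - Finsupp.single ⟨κ, t⟩ (c * (a₀ : A)) := by
          rw [smul_sub, Finsupp.smul_single, Finsupp.smul_single, smul_eq_mul, mul_one,
            smul_eq_mul]
        rw [hc, map_sub, Dx_single, Dx_single]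
        have hmul : compP 𝒜 (d - κ) (c * (a₀ : A))
            = compP 𝒜 (d - κ) c * (a₀ : A) := by
          have h0 : (a₀ : A) ∈ 𝒜 0 := A0_mem 𝒜 A₀ hA₀ a₀
          have := compP_smul_homog 𝒜 𝒜 c h0 (d - κ)
          rw [smul_eq_mul, smul_eq_mul, sub_zero] at this
          exact this
        rw [hmul]
        have h2 : Finsupp.single (⟨κ, a₀ • t⟩ : SIdx 𝒜 A₀ P ℳ) (compP 𝒜 (d - κ) c)
              - Finsupp.single (⟨κ, t⟩ : SIdx 𝒜 A₀ P ℳ) (compP 𝒜 (d - κ) c * (a₀ : A))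
            = compP 𝒜 (d - κ) c •
              (Finsupp.single (⟨κ, a₀ • t⟩ : SIdx 𝒜 A₀ P ℳ) (1:A)
                - Finsupp.single ⟨κ, t⟩ (a₀ : A)) := by
          rw [smul_sub, Finsupp.smul_single, Finsupp.smul_single, smul_eq_mul, mul_one,
            smul_eq_mul]
        rw [h2]
        exact Submodule.smul_mem _ _ (Submodule.subset_span (Or.inr ⟨κ, t, a₀, rfl⟩))
    | zero => intro c; rw [smul_zero, map_zero]; exact zero_mem _
    | add y z _ _ hy hz =>
      intro c; rw [smul_add, map_add]; exact add_mem (hy c) (hz c)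
    | smul a y _ hy =>
      intro c; rw [smul_smul]; exact hy (c * a)
  have := main 1
  rwa [one_smul] at this

lemma Dx_sum (x : XF 𝒜 A₀ P ℳ) :
    ∃ S : Finset ℤ, (∀ d ∉ S, Dx 𝒜 A₀ P ℳ d x = 0) ∧
      ∑ d ∈ S, Dx 𝒜 A₀ P ℳ d x = x := by
  classical
  induction x using Finsupp.induction with
  | zero => exact ⟨∅, fun d _ => map_zero _, by simp⟩
  | single_add s a f _ _ ih =>
    obtain ⟨Sf, hSf0, hSfsum⟩ := ih
    refine ⟨Sf ∪ (DirectSum.decompose 𝒜 a).support.image (· + s.1), fun d hd => ?_, ?_⟩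
    · rw [map_add, Dx_single]
      have h1 : compP 𝒜 (d - s.1) a = 0 := by
        by_contra h
        have : d - s.1 ∈ (DirectSum.decompose 𝒜 a).support := by
          rw [DFinsupp.mem_support_iff]
          intro hz
          exact h (by rw [compP_apply, hz]; rfl)
        exact hd (Finset.mem_union_right _
          (Finset.mem_image.mpr ⟨d - s.1, this, by omega⟩))
      rw [h1, Finsupp.single_zero, hSf0 d (fun hmem => hd (Finset.mem_union_left _ hmem)),
        add_zero]
    · rw [Finset.sum_congr rfl (fun d _ => by rw [map_add, Dx_single]), Finset.sum_add_distrib]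
      congr 1
      · have hsum : ∑ d ∈ Sf ∪ (DirectSum.decompose 𝒜 a).support.image (· + s.1),
            compP 𝒜 (d - s.1) a = a := by
          rw [← Finset.sum_subset (Finset.subset_union_right
            (s₁ := Sf) (s₂ := (DirectSum.decompose 𝒜 a).support.image (· + s.1)))
            (fun d _ hd => ?_)]
          · rw [Finset.sum_image (fun x _ y _ h => by omega)]
            have : ∀ j ∈ (DirectSum.decompose 𝒜 a).support,
                compP 𝒜 (j + s.1 - s.1) a = compP 𝒜 j a := by
              intro j _; rw [add_sub_cancel_right]
            rw [Finset.sum_congr rfl this]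
            exact DirectSum.sum_support_decompose 𝒜 a
          · have : d - s.1 ∉ (DirectSum.decompose 𝒜 a).support := by
              intro hmem
              exact hd (Finset.mem_image.mpr ⟨d - s.1, hmem, by omega⟩)
            simpa [compP_apply] using DFinsupp.notMem_support_iff.mp this
        rw [← Finsupp.single_finset_sum, hsum]
      · rw [← Finset.sum_subset (Finset.subset_union_left
          (s₁ := Sf) (s₂ := (DirectSum.decompose 𝒜 a).support.image (· + s.1)))
          (fun d _ hd => hSf0 d hd)]
        exact hSfsum

lemma Dx_vanish {m d : ℤ} (hdm : d < m) {x : XF 𝒜 A₀ P ℳ}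
    (hx : x ∈ AddSubgroup.closure (SxSet 𝒜 A₀ P ℳ m)) : Dx 𝒜 A₀ P ℳ d x = 0 := by
  induction hx using AddSubgroup.closure_induction with
  | mem y hy =>
    obtain ⟨κ, t, j, a, ha, hm, rfl⟩ := hy
    rw [Dx_single]
    have : compP 𝒜 (d - κ) a = 0 := compP_of_mem_ne 𝒜 ha (by omega)
    rw [this, Finsupp.single_zero]
  | zero => exact map_zero _
  | add y z _ _ hy hz => rw [map_add, hy, hz, add_zero]
  | neg y _ hy => rw [map_neg, hy, neg_zero]

include hsupp hA₀ hgsec hggr in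
lemma ΦQ_ker_eq_zero [Module.Finite A P] {d₀ : ℤ}
    (hd₀ : ∀ ω : ℤ, ω < d₀ → ∀ p ∈ ℳ ω, p = 0)
    (σ : P →ₗ[A] QM 𝒜 A₀ P ℳ) (hσ : (ΦQ 𝒜 A₀ P ℳ g).comp σ = LinearMap.id)
    {q : QM 𝒜 A₀ P ℳ} (hq : ΦQ 𝒜 A₀ P ℳ g q = 0) : q = 0 := by
  classical
  obtain ⟨x₀, rfl⟩ := Submodule.Quotient.mk_surjective _ q
  have hDmem : ∀ d : ℤ, Dx 𝒜 A₀ P ℳ d x₀ ∈ RRel 𝒜 A₀ P ℳ := by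
    intro d
    have hqge := ker_Qge 𝒜 A₀ P ℳ hsupp hA₀ g hgsec hggr hd₀ σ hσ (d + 1) hq
    have himg : (Submodule.Quotient.mk : XF 𝒜 A₀ P ℳ → QM 𝒜 A₀ P ℳ) '' SxSet 𝒜 A₀ P ℳ (d+1)
        = ⇑((RRel 𝒜 A₀ P ℳ).mkQ.toAddMonoidHom) '' SxSet 𝒜 A₀ P ℳ (d+1) := rfl
    rw [Qge, himg, ← AddMonoidHom.map_closure] at hqge
    obtain ⟨x₁, hx₁, hmk⟩ := hqge
    have hmk' : (Submodule.Quotient.mk x₀ : QM 𝒜 A₀ P ℳ) = Submodule.Quotient.mk x₁ :=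
      hmk.symm
    have hsub : x₀ - x₁ ∈ RRel 𝒜 A₀ P ℳ := (Submodule.Quotient.eq _).mp hmk'
    have : Dx 𝒜 A₀ P ℳ d x₀ = Dx 𝒜 A₀ P ℳ d x₁ + Dx 𝒜 A₀ P ℳ d (x₀ - x₁) := by
      rw [← map_add]; congr 1; abel
    rw [this, Dx_vanish 𝒜 A₀ P ℳ (by omega) hx₁, zero_add]
    exact Dx_R 𝒜 A₀ P ℳ hA₀ hsub d
  obtain ⟨S, _, hSsum⟩ := Dx_sum 𝒜 A₀ P ℳ x₀
  have : x₀ ∈ RRel 𝒜 A₀ P ℳ := by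
    rw [← hSsum]
    exact Submodule.sum_mem _ (fun d _ => hDmem d)
  rwa [Submodule.Quotient.mk_eq_zero]

/-! ### surjectivity of `ΦQ` -/

/-- the submodule of `P` generated by sections of degree at most `lam` -/
def Mle (lam : ℤ) : Submodule A P :=
  Submodule.span A {x : P | ∃ κ ≤ lam, ∃ t : TSub 𝒜 A₀ P ℳ κ, x = g (t : P ⧸ posSMulSubmodule 𝒜 P)}

lemma Mle_mono {l l' : ℤ} (h : l ≤ l') : Mle 𝒜 A₀ P ℳ g l ≤ Mle 𝒜 A₀ P ℳ g l' :=
  Submodule.span_mono (fun x ⟨κ, hκ, t, hx⟩ => ⟨κ, le_trans hκ h, t, hx⟩)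

include hsupp hA₀ hgsec hggr in
lemma homog_mem_Mle {d₀ : ℤ} (hd₀ : ∀ ω : ℤ, ω < d₀ → ∀ p ∈ ℳ ω, p = 0)
    (ω : ℤ) {p : P} (hp : p ∈ ℳ ω) : p ∈ Mle 𝒜 A₀ P ℳ g ω := by
  obtain ⟨n, hn⟩ : ∃ n : ℕ, ω < d₀ + n := ⟨(ω + 1 - d₀).toNat, by omega⟩
  induction n generalizing ω p with
  | zero => rw [hd₀ ω (by omega) p hp]; exact zero_mem _
  | succ n ih =>
    by_cases hω : ω < d₀ + n
    · exact ih ω hp hω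
    · have hωeq : ω = d₀ + n := by omega
      set t : TSub 𝒜 A₀ P ℳ ω := ⟨Submodule.Quotient.mk p, mk_mem_TSub 𝒜 ℳ A₀ hp⟩ with ht
      have hgt : g (t : P ⧸ posSMulSubmodule 𝒜 P) ∈ ℳ ω := hggr ω _ t.2
      have hq1 : p - g (t : P ⧸ posSMulSubmodule 𝒜 P) ∈ ℳ ω := sub_mem hp hgt
      have hq2 : p - g (t : P ⧸ posSMulSubmodule 𝒜 P) ∈ posSMulSubmodule 𝒜 P := by
        rw [← Submodule.Quotient.mk_eq_zero (posSMulSubmodule 𝒜 P),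
          Submodule.Quotient.mk_sub, hgsec]
        simp [ht]
      have hq3 : p - g (t : P ⧸ posSMulSubmodule 𝒜 P) ∈ filtration (A := A) P ℳ (ω - 1) :=
        mem_filtration_of_posSMul 𝒜 hsupp ℳ hq1 hq2
      have hfil : filtration (A := A) P ℳ (ω - 1) ≤ Mle 𝒜 A₀ P ℳ g ω := by
        rw [filtration, Submodule.span_le]
        rintro x ⟨ω', hω', hx⟩
        exact Mle_mono 𝒜 A₀ P ℳ g (by omega) (ih ω' hx (by omega))
      have : p = g (t : P ⧸ posSMulSubmodule 𝒜 P)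
          + (p - g (t : P ⧸ posSMulSubmodule 𝒜 P)) := by abel
      rw [this]
      exact add_mem (Submodule.subset_span ⟨ω, le_refl ω, t, rfl⟩) (hfil hq3)

include hsupp hA₀ hgsec hggr in
lemma filtration_le_Mle {d₀ : ℤ} (hd₀ : ∀ ω : ℤ, ω < d₀ → ∀ p ∈ ℳ ω, p = 0) (lam : ℤ) :
    filtration (A := A) P ℳ lam ≤ Mle 𝒜 A₀ P ℳ g lam := by
  rw [filtration, Submodule.span_le]
  rintro x ⟨ω, hω, hx⟩
  exact Mle_mono 𝒜 A₀ P ℳ g hω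
    (homog_mem_Mle 𝒜 A₀ P ℳ hsupp hA₀ g hgsec hggr hd₀ ω hx)

lemma Mle_le_range (lam : ℤ) : Mle 𝒜 A₀ P ℳ g lam ≤ LinearMap.range (ΦQ 𝒜 A₀ P ℳ g) := by
  rw [Mle, Submodule.span_le]
  rintro x ⟨κ, _, t, rfl⟩
  exact ⟨eQ 𝒜 A₀ P ℳ κ t, ΦQ_e 𝒜 A₀ P ℳ g κ t⟩

include hsupp hA₀ hgsec hggr in
lemma ΦQ_surj {d₀ : ℤ} (hd₀ : ∀ ω : ℤ, ω < d₀ → ∀ p ∈ ℳ ω, p = 0) :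
    Function.Surjective (ΦQ 𝒜 A₀ P ℳ g) := by
  intro p
  have : p ∈ LinearMap.range (ΦQ 𝒜 A₀ P ℳ g) := by
    obtain ⟨S, _, hSsum⟩ := compP_sum ℳ p
    rw [← hSsum]
    refine Submodule.sum_mem _ (fun d _ => ?_)
    exact Mle_le_range 𝒜 A₀ P ℳ g d
      (homog_mem_Mle 𝒜 A₀ P ℳ hsupp hA₀ g hgsec hggr hd₀ d (compP_mem ℳ d p))
  exact this

end QCon
end FQI

open FQI

/-- Let `A` be an `ℕ`-graded ring, `P` a finitely generated `ℤ`-graded projective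
`A`-module with filtration `F^λP`. For each `k`, the quotient `F^{k+1}P/F^kP` is
isomorphic to `T(P)_{k+1} ⊗_{A₀} A(−(k+1))` (encoded by a base change `E` of
`T(P)_{k+1}`), via the map induced by any `A₀`-linear graded section `g` of
`P → T(P) = P/P·A₊`; moreover the isomorphism is natural in `P`, i.e. independent of the
choice of section: the maps `F, F₀` induced by two sections `g, g₀` coincide. -/
theorem filtration_quotient_iso (A : Type u) [Ring A] (𝒜 : ℤ → AddSubgroup A)
    [GradedRing 𝒜] (hsupp : ∀ n : ℤ, n < 0 → 𝒜 n = ⊥)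
    (A₀ : Subring A) (hA₀ : (A₀ : Set A) = (𝒜 0 : Set A))
    (P : Type u) [AddCommGroup P] [Module A P] (ℳ : ℤ → AddSubgroup P)
    [DirectSum.Decomposition ℳ] [SetLike.GradedSMul 𝒜 ℳ]
    [Module.Finite A P] [Module.Projective A P] (k : ℤ)
    (E : Type u) [AddCommGroup E] [Module A E]
    (ι : (TSub 𝒜 A₀ P ℳ (k + 1)) →ₗ[A₀] E)
    (hE : ∀ (N : Type u) [AddCommGroup N] [Module A N]
      (f : (TSub 𝒜 A₀ P ℳ (k + 1)) →ₗ[A₀] N),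
      ∃! F : E →ₗ[A] N, ∀ x, F (ι x) = f x)
    (g g₀ : (P ⧸ posSMulSubmodule 𝒜 P) →ₗ[A₀] P)
    (hgsec : ∀ t, Submodule.Quotient.mk (g t) = t)
    (hg₀sec : ∀ t, Submodule.Quotient.mk (g₀ t) = t)
    (hggr : ∀ (n : ℤ) (t : P ⧸ posSMulSubmodule 𝒜 P), t ∈ TSub 𝒜 A₀ P ℳ n → g t ∈ ℳ n)
    (hg₀gr : ∀ (n : ℤ) (t : P ⧸ posSMulSubmodule 𝒜 P), t ∈ TSub 𝒜 A₀ P ℳ n → g₀ t ∈ ℳ n)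
    (F F₀ : E →ₗ[A] P ⧸ filtration P ℳ k)
    (hF : ∀ x : TSub 𝒜 A₀ P ℳ (k + 1), F (ι x) = Submodule.Quotient.mk (g (x : _)))
    (hF₀ : ∀ x : TSub 𝒜 A₀ P ℳ (k + 1), F₀ (ι x) = Submodule.Quotient.mk (g₀ (x : _))) :
    F = F₀ ∧ Function.Injective F ∧
      LinearMap.range F = (filtration P ℳ (k + 1)).map (filtration P ℳ k).mkQ := by
  classical
  obtain ⟨d₀, hd₀⟩ := FQI.exists_d₀ 𝒜 hsupp ℳ
  have hk1 : (k + 1 : ℤ) - 1 = k := by ring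
  -- the two sections agree modulo `F^k`
  have hgg0 : ∀ t : TSub 𝒜 A₀ P ℳ (k+1),
      (Submodule.Quotient.mk (g (t : P ⧸ posSMulSubmodule 𝒜 P)) : P ⧸ filtration (A := A) P ℳ k)
        = Submodule.Quotient.mk (g₀ (t : P ⧸ posSMulSubmodule 𝒜 P)) := by
    intro t
    rw [Submodule.Quotient.eq]
    have h1 : g (t : P ⧸ posSMulSubmodule 𝒜 P) - g₀ (t : P ⧸ posSMulSubmodule 𝒜 P)
        ∈ ℳ (k+1) := sub_mem (hggr _ _ t.2) (hg₀gr _ _ t.2)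
    have h2 : g (t : P ⧸ posSMulSubmodule 𝒜 P) - g₀ (t : P ⧸ posSMulSubmodule 𝒜 P)
        ∈ posSMulSubmodule 𝒜 P := by
      rw [← Submodule.Quotient.mk_eq_zero (posSMulSubmodule 𝒜 P),
        Submodule.Quotient.mk_sub, hgsec, hg₀sec, sub_self]
    have := mem_filtration_of_posSMul 𝒜 hsupp ℳ h1 h2
    rwa [hk1] at this
  -- the canonical `A₀`-linear map `T(P)_{k+1} → F^{k+1}P/F^kP`
  set f1 : (TSub 𝒜 A₀ P ℳ (k + 1)) →ₗ[A₀] (P ⧸ filtration (A := A) P ℳ k) :=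
    { toFun := fun t =>
        Submodule.Quotient.mk (g (t : P ⧸ posSMulSubmodule 𝒜 P))
      map_add' := fun t t' => by
        rw [Submodule.coe_add, map_add, Submodule.Quotient.mk_add]
      map_smul' := fun a₀ t => by
        rw [Submodule.coe_smul, map_smul]
        have h1 : a₀ • g (t : P ⧸ posSMulSubmodule 𝒜 P)
            = (a₀ : A) • g (t : P ⧸ posSMulSubmodule 𝒜 P) := rfl
        rw [h1, Submodule.Quotient.mk_smul]
        rfl } with hf1
  -- Goal 1 : F = F₀
  obtain ⟨Fu, hFu, huniq⟩ := hE _ f1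
  have hFeq : F = Fu := huniq F (fun x => hF x)
  have hF₀eq : F₀ = Fu := huniq F₀ (fun x => by rw [hF₀ x, hf1]; exact (hgg0 x).symm)
  have goal1 : F = F₀ := by rw [hFeq, hF₀eq]
  -- set up the inverse
  have hsurj := ΦQ_surj 𝒜 A₀ P ℳ hsupp hA₀ g hgsec hggr hd₀
  obtain ⟨σ, hσ⟩ := Module.projective_lifting_property (ΦQ 𝒜 A₀ P ℳ g) LinearMap.id hsurj
  have hσ' : ∀ p : P, ΦQ 𝒜 A₀ P ℳ g (σ p) = p := fun p => by
    simpa using LinearMap.congr_fun hσ p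
  have hinj : Function.Injective (ΦQ 𝒜 A₀ P ℳ g) := by
    intro a b hab
    have h0 : ΦQ 𝒜 A₀ P ℳ g (a - b) = 0 := by rw [map_sub, hab, sub_self]
    have := ΦQ_ker_eq_zero 𝒜 A₀ P ℳ hsupp hA₀ g hgsec hggr hd₀ σ hσ h0
    exact sub_eq_zero.mp this
  have hσg : ∀ (κ : ℤ) (t : TSub 𝒜 A₀ P ℳ κ),
      σ (g (t : P ⧸ posSMulSubmodule 𝒜 P)) = eQ 𝒜 A₀ P ℳ κ t := by
    intro κ t
    apply hinj
    rw [hσ', ΦQ_e]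
  -- the retraction `ℓ : P → E`
  set fE : ∀ κ : ℤ, (TSub 𝒜 A₀ P ℳ κ) →ₗ[A₀] E := fun κ =>
    if h : κ = k + 1 then
      ι ∘ₗ (LinearEquiv.ofEq (TSub 𝒜 A₀ P ℳ κ) (TSub 𝒜 A₀ P ℳ (k+1))
        (by rw [h])).toLinearMap
    else 0 with hfE
  set ℓ : P →ₗ[A] E := (liftQM 𝒜 A₀ P ℳ fE).comp σ with hℓ
  have hℓg : ∀ t : TSub 𝒜 A₀ P ℳ (k+1), ℓ (g (t : P ⧸ posSMulSubmodule 𝒜 P)) = ι t := by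
    intro t
    rw [hℓ, LinearMap.comp_apply, hσg (k+1) t, liftQM_e]
    have hfe1 : fE (k+1) = ι ∘ₗ (LinearEquiv.ofEq (TSub 𝒜 A₀ P ℳ (k+1))
        (TSub 𝒜 A₀ P ℳ (k+1)) rfl).toLinearMap := by
      rw [hfE]; exact dif_pos rfl
    rw [hfe1]
    exact congrArg ι (Subtype.ext rfl)
  have hℓ0 : ∀ (κ : ℤ), κ ≤ k → ∀ t : TSub 𝒜 A₀ P ℳ κ,
      ℓ (g (t : P ⧸ posSMulSubmodule 𝒜 P)) = 0 := by
    intro κ hκ t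
    rw [hℓ, LinearMap.comp_apply, hσg κ t, liftQM_e]
    have hfe0 : fE κ = 0 := by rw [hfE]; exact dif_neg (by omega)
    rw [hfe0]
    rfl
  have hℓfil : filtration (A := A) P ℳ k ≤ LinearMap.ker ℓ := by
    refine le_trans (filtration_le_Mle 𝒜 A₀ P ℳ hsupp hA₀ g hgsec hggr hd₀ k) ?_
    rw [Mle, Submodule.span_le]
    rintro x ⟨κ, hκ, t, rfl⟩
    exact hℓ0 κ hκ t
  set L : (P ⧸ filtration (A := A) P ℳ k) →ₗ[A] E :=
    Submodule.liftQ (filtration (A := A) P ℳ k) ℓ hℓfil with hL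
  have hLmk : ∀ p : P, L (Submodule.Quotient.mk p) = ℓ p := fun p =>
    Submodule.liftQ_apply _ ℓ p
  -- Goal 2 : injectivity
  obtain ⟨Fu2, hFu2, huniq2⟩ := hE E ι
  have hLF : L.comp F = LinearMap.id := by
    have h1 : L.comp F = Fu2 := huniq2 _ (fun x => by
      rw [LinearMap.comp_apply, hF x, hLmk, hℓg x])
    have h2 : (LinearMap.id : E →ₗ[A] E) = Fu2 := huniq2 _ (fun x => rfl)
    rw [h1, h2]
  have goal2 : Function.Injective F := by
    intro a b hab
    have h1 := LinearMap.congr_fun hLF a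
    have h2 := LinearMap.congr_fun hLF b
    simp only [LinearMap.comp_apply, LinearMap.id_apply] at h1 h2
    rw [← h1, ← h2, hab]
  -- Goal 3 : range
  have hEtop : Submodule.span A (Set.range (fun t : TSub 𝒜 A₀ P ℳ (k+1) => ι t)) = ⊤ := by
    set p := Submodule.span A (Set.range (fun t : TSub 𝒜 A₀ P ℳ (k+1) => ι t)) with hp
    obtain ⟨Fz, hFz, huniqz⟩ := hE (E ⧸ p) 0
    have hmkq : p.mkQ = Fz := huniqz _ (fun x => by
      show p.mkQ (ι x) = 0
      rw [Submodule.mkQ_apply, Submodule.Quotient.mk_eq_zero]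
      exact Submodule.subset_span ⟨x, rfl⟩)
    have hzero : (0 : E →ₗ[A] E ⧸ p) = Fz := huniqz _ (fun x => rfl)
    rw [eq_top_iff]
    intro e _
    have : p.mkQ e = 0 := by rw [hmkq, ← hzero]; rfl
    rwa [Submodule.mkQ_apply, Submodule.Quotient.mk_eq_zero] at this
  have goal3 : LinearMap.range F = (filtration (A := A) P ℳ (k + 1)).map (filtration (A := A) P ℳ k).mkQ := by
    apply le_antisymm
    · rw [LinearMap.range_eq_map, ← hEtop, Submodule.map_span, Submodule.span_le]
      rintro y ⟨e, ⟨t, rfl⟩, rfl⟩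
      rw [hF t]
      exact ⟨g (t : P ⧸ posSMulSubmodule 𝒜 P),
        mem_filtration_of_mem ℳ (le_refl _) (hggr _ _ t.2), rfl⟩
    · rw [show filtration (A := A) P ℳ (k+1)
          = Submodule.span A {x : P | ∃ ω ≤ (k+1:ℤ), x ∈ ℳ ω} from rfl,
        Submodule.map_span, Submodule.span_le]
      rintro y ⟨x, ⟨ω, hω, hx⟩, rfl⟩
      by_cases hcase : ω = k + 1
      · rw [hcase] at hx
        set t : TSub 𝒜 A₀ P ℳ (k+1) := ⟨Submodule.Quotient.mk x, mk_mem_TSub 𝒜 ℳ A₀ hx⟩ with ht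
        have hxt : ((filtration (A := A) P ℳ k).mkQ x : P ⧸ filtration (A := A) P ℳ k)
            = Submodule.Quotient.mk (g (t : P ⧸ posSMulSubmodule 𝒜 P)) := by
          rw [Submodule.mkQ_apply, Submodule.Quotient.eq]
          have h1 : x - g (t : P ⧸ posSMulSubmodule 𝒜 P) ∈ ℳ (k+1) :=
            sub_mem hx (hggr _ _ t.2)
          have h2 : x - g (t : P ⧸ posSMulSubmodule 𝒜 P) ∈ posSMulSubmodule 𝒜 P := by
            rw [← Submodule.Quotient.mk_eq_zero (posSMulSubmodule 𝒜 P),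
              Submodule.Quotient.mk_sub, hgsec]
            rw [ht]
            exact sub_self _
          have := mem_filtration_of_posSMul 𝒜 hsupp ℳ h1 h2
          rwa [hk1] at this
        rw [SetLike.mem_coe, hxt, ← hF t]
        exact ⟨ι t, rfl⟩
      · have hω' : ω ≤ k := by omega
        have h0 : (filtration (A := A) P ℳ k).mkQ x = 0 := by
          rw [Submodule.mkQ_apply, Submodule.Quotient.mk_eq_zero]
          exact mem_filtration_of_mem ℳ hω' hx
        rw [SetLike.mem_coe, h0]
        exact zero_mem _
  exact ⟨goal1, goal2, goal3⟩

end
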